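/- arXiv:2004.14063 — 2 statements merged into one kernel-verified Lean document; each statement's English description precedes it below -/
import Mathlib

section
/- Suppose L is additionally a Noether lattice which is local (has a unique maximal element) and a domain (for all a, b ∈ L, a·b = 0 implies a = 0 or b = 0), and let δ be an expansion function on L. Then a proper element p ∈ L is φ_n-δ-primary for every integer n ≥ 2 if and only if p is δ-primary. -/
open CompleteLattice

/-- The compact-element notion of the older Mathlib (Dec 2024), restored verbatim. -/
def CompleteLattice.IsCompactElement {α : Type*} [CompleteLattice α] (k : α) : Prop :=
  ∀ s : Set α, k ≤ sSup s → ∃ t : Finset α, ↑t ⊆ s ∧ k ≤ t.sup id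

variable {L : Type*} [CompleteLattice L] [CommMonoid L]

/-- `L` is a compactly generated multiplicative lattice: multiplication distributes over
arbitrary joins, the top element is the multiplicative identity, `1` is a compact element,
every element is a join of compact elements, and products of compact elements are compact. -/
def IsCGMultLattice (L : Type*) [CompleteLattice L] [CommMonoid L] : Prop :=
  (∀ (a : L) (S : Set L), a * sSup S = ⨆ b ∈ S, a * b) ∧
  ((1 : L) = ⊤) ∧
  CompleteLattice.IsCompactElement (1 : L) ∧
  (∀ a : L, a = sSup {x : L | CompleteLattice.IsCompactElement x ∧ x ≤ a}) ∧
  (∀ x y : L, CompleteLattice.IsCompactElement x → CompleteLattice.IsCompactElement y →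
    CompleteLattice.IsCompactElement (x * y))

/-- An expansion function on `L`: `a ≤ δ a` and `δ` is monotone. -/
def IsExpansion (δ : L → L) : Prop :=
  (∀ a : L, a ≤ δ a) ∧ ∀ a b : L, a ≤ b → δ a ≤ δ b

/-- A proper element `p` is `φ`-`δ`-primary if `a*b ≤ p` and `a*b ≰ φ p` imply
`a ≤ p` or `b ≤ δ p`. -/
def IsPhiDeltaPrimary (φ δ : L → L) (p : L) : Prop :=
  p < 1 ∧ ∀ a b : L, a * b ≤ p → ¬ a * b ≤ φ p → a ≤ p ∨ b ≤ δ p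

/-- A proper element `p` is `δ`-primary if `a*b ≤ p` implies `a ≤ p` or `b ≤ δ p`. -/
def IsDeltaPrimary (δ : L → L) (p : L) : Prop :=
  p < 1 ∧ ∀ a b : L, a * b ≤ p → a ≤ p ∨ b ≤ δ p

/-- A proper element `p` is `φ`-prime if `a*b ≤ p` and `a*b ≰ φ p` imply
`a ≤ p` or `b ≤ p`. -/
def IsPhiPrime (φ : L → L) (p : L) : Prop :=
  p < 1 ∧ ∀ a b : L, a * b ≤ p → ¬ a * b ≤ φ p → a ≤ p ∨ b ≤ p

/-- The residual `(a : b)`, the join of all `x` with `x * b ≤ a`. -/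
def lres (a b : L) : L := sSup {x : L | x * b ≤ a}

/-- The radical `√a`, the join of all compact `x` with `x ^ n ≤ a` for some `n ≥ 1`. -/
def lradical (a : L) : L :=
  sSup {x : L | CompleteLattice.IsCompactElement x ∧ ∃ n : ℕ, 0 < n ∧ x ^ n ≤ a}

/-- A principal element of a multiplicative lattice. -/
def IsPrincipalElem (e : L) : Prop :=
  ∀ a b : L, a ⊓ b * e = (lres a e ⊓ b) * e ∧ lres (a * e ⊔ b) e = lres b e ⊔ a

/-- A Noether lattice: modular, principally generated, satisfying the ascending
chain condition. -/
def IsNoetherLattice (L : Type*) [CompleteLattice L] [CommMonoid L] : Prop :=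
  IsModularLattice L ∧ (∀ a : L, a = sSup {e : L | IsPrincipalElem e ∧ e ≤ a}) ∧
  WellFoundedGT L

/-- A maximal element: proper, and `m < x ≤ 1` implies `x = 1`. -/
def IsMaximalElem (m : L) : Prop :=
  m < 1 ∧ ∀ x : L, m < x → x ≤ 1 → x = 1

section Aux

lemma cg_mul_sup (hL : IsCGMultLattice L) (a x y : L) : a * (x ⊔ y) = a * x ⊔ a * y := by
  have h := hL.1 a {x, y}
  rw [sSup_pair] at h
  rw [h, iSup_pair]

lemma cg_mul_le_mul_right (hL : IsCGMultLattice L) {x y : L} (a : L) (h : x ≤ y) :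
    a * x ≤ a * y := by
  have : a * y = a * x ⊔ a * y := by rw [← cg_mul_sup hL, sup_eq_right.mpr h]
  rw [this]; exact le_sup_left

lemma cg_mul_le_left (hL : IsCGMultLattice L) (a b : L) : a * b ≤ a := by
  have : a * b ≤ a * 1 := cg_mul_le_mul_right hL a (by rw [hL.2.1]; exact le_top)
  simpa using this

lemma cg_lres_mul_le (hL : IsCGMultLattice L) (a b : L) : lres a b * b ≤ a := by
  rw [mul_comm, lres, hL.1]
  exact iSup₂_le fun x hx => by rw [mul_comm]; exact hx

/-- In a local lattice (with ACC), every proper element is below the unique maximal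
element. -/
lemma proper_le_max (hL : IsCGMultLattice L) (hN : IsNoetherLattice L) (m : L)
    (hmu : ∀ m' : L, IsMaximalElem m' → m' = m) {x : L} (hx : x < 1) : x ≤ m := by
  haveI : WellFoundedGT L := hN.2.2
  obtain ⟨m', hm's, hm'max⟩ := (IsWellFounded.wf (r := ((· > ·) : L → L → Prop))).has_min
    {y : L | x ≤ y ∧ y < 1} ⟨x, le_refl x, hx⟩
  have hmax : IsMaximalElem m' := by
    refine ⟨hm's.2, fun z hz hz1 => ?_⟩
    by_contra hne
    exact hm'max z ⟨hm's.1.trans hz.le, lt_of_le_of_ne hz1 hne⟩ hz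
  rw [← hmu m' hmax]
  exact hm's.1

/-- Nakayama's lemma for finite joins of principal elements in a local lattice. -/
lemma nakayama (hL : IsCGMultLattice L) (hN : IsNoetherLattice L) (m : L)
    (hm : IsMaximalElem m) (hmu : ∀ m' : L, IsMaximalElem m' → m' = m) :
    ∀ t : Finset L, (∀ e ∈ t, IsPrincipalElem e) → t.sup id ≤ t.sup id * m →
      t.sup id = ⊥ := by
  classical
  intro t
  induction t using Finset.induction_on with
  | empty => intro _ _; simp
  | @insert e s he ih =>
    intro hprin hle
    set b : L := s.sup id with hb
    have hsup : (insert e s).sup id = e ⊔ b := by rw [Finset.sup_insert]; rfl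
    rw [hsup] at hle
    have hpe : IsPrincipalElem e := hprin e (Finset.mem_insert_self e s)
    have hkey : lres (m * e ⊔ b * m) e = lres (b * m) e ⊔ m := (hpe m (b * m)).2
    have hle' : e ≤ m * e ⊔ b * m := by
      calc e ≤ (e ⊔ b) * m := le_trans le_sup_left hle
        _ = m * (e ⊔ b) := mul_comm _ _
        _ = m * e ⊔ m * b := cg_mul_sup hL m e b
        _ = m * e ⊔ b * m := by rw [mul_comm m b]
    have htop : lres (m * e ⊔ b * m) e = ⊤ := by
      apply top_unique
      rw [← hL.2.1]
      exact le_sSup (by simpa using hle')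
    have hlrtop : lres (b * m) e = ⊤ := by
      by_contra hne
      have hlt : lres (b * m) e < 1 := by
        rw [hL.2.1]; exact lt_of_le_of_ne le_top (by rw [← hL.2.1] at hne ⊢; exact hne)
      have := proper_le_max hL hN m hmu hlt
      have : lres (b * m) e ⊔ m ≤ m := sup_le this le_rfl
      rw [← hkey, htop] at this
      have : m = ⊤ := top_unique this
      rw [← hL.2.1] at this
      exact absurd this (ne_of_lt hm.1)
    have hebm : e ≤ b * m := by
      have : lres (b * m) e * e ≤ b * m := cg_lres_mul_le hL (b * m) e
      rw [hlrtop, ← hL.2.1, one_mul] at this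
      exact this
    have heb : e ≤ b := hebm.trans (cg_mul_le_left hL b m)
    have hab : e ⊔ b = b := sup_eq_right.mpr heb
    rw [hab] at hle
    have hbbot : b = ⊥ := ih (fun f hf => hprin f (Finset.mem_insert_of_mem hf)) hle
    rw [hsup, hab, hbbot]

end Aux

theorem local_noetherian_domain_phiN_iff_delta (hL : IsCGMultLattice L)
    (hN : IsNoetherLattice L) (m : L) (hm : IsMaximalElem m)
    (hmu : ∀ m' : L, IsMaximalElem m' → m' = m)
    (hdom : ∀ a b : L, a * b = ⊥ → a = ⊥ ∨ b = ⊥)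
    (δ : L → L) (hδ : IsExpansion δ) (p : L) (hp : p < 1) :
    (∀ n : ℕ, 2 ≤ n → IsPhiDeltaPrimary (fun a : L => a ^ n) δ p) ↔
      IsDeltaPrimary δ p := by
  constructor
  · intro h
    refine ⟨hp, fun a b hab => ?_⟩
    by_contra hcon
    push_neg at hcon
    obtain ⟨hap, hbp⟩ := hcon
    -- step 1: a * b ≤ p ^ 2
    have hab2 : a * b ≤ p ^ 2 := by
      by_contra hn
      rcases (h 2 le_rfl).2 a b hab hn with h' | h'
      · exact hap h'
      · exact hbp h'
    -- step 2: (a ⊔ p) * (b ⊔ p) ≤ p ^ 3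
    set a' := a ⊔ p with ha'
    set b' := b ⊔ p with hb'
    have hab' : a' * b' ≤ p := by
      have h1 : a' * b' = a' * b ⊔ a' * p := cg_mul_sup hL a' b p
      have h2 : a' * b = a * b ⊔ p * b := by
        rw [mul_comm a' b, ha', cg_mul_sup hL b a p, mul_comm b a, mul_comm b p]
      rw [h1, h2]
      refine sup_le (sup_le hab (cg_mul_le_left hL p b)) ?_
      rw [mul_comm]
      exact cg_mul_le_left hL p a'
    have hab3 : a' * b' ≤ p ^ 3 := by
      by_contra hn
      rcases (h 3 (by norm_num)).2 a' b' hab' hn with h' | h'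
      · exact hap (le_sup_left.trans h' : a ≤ p)
      · exact hbp (le_sup_left.trans h' : b ≤ δ p)
    -- step 3: p ^ 2 ≤ p ^ 2 * m, so p ^ 2 = ⊥ by Nakayama
    have hpm : p ≤ m := by
      rcases eq_or_lt_of_le (bot_le : ⊥ ≤ p) with hpbot | hpos
      · rw [← hpbot]; exact bot_le
      · exact proper_le_max hL hN m hmu hp
    have hmono : ∀ x x' y y' : L, x ≤ x' → y ≤ y' → x * y ≤ x' * y' := by
      intro x x' y y' hx hy
      calc x * y ≤ x * y' := cg_mul_le_mul_right hL x hy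
        _ = y' * x := mul_comm _ _
        _ ≤ y' * x' := cg_mul_le_mul_right hL y' hx
        _ = x' * y' := mul_comm _ _
    have hp2le : p ^ 2 ≤ p ^ 2 * m := by
      have h1 : p ^ 2 ≤ p ^ 3 := by
        calc p ^ 2 = p * p := sq p
          _ ≤ a' * b' := hmono p a' p b' le_sup_right le_sup_right
          _ ≤ p ^ 3 := hab3
      calc p ^ 2 ≤ p ^ 3 := h1
        _ = p ^ 2 * p := pow_succ p 2
        _ ≤ p ^ 2 * m := cg_mul_le_mul_right hL _ hpm
    -- Nakayama: p ^ 2 = ⊥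
    have hp2bot : p ^ 2 = ⊥ := by
      haveI : WellFoundedGT L := hN.2.2
      obtain ⟨t, ht1, ht2⟩ := CompleteLattice.WellFoundedGT.isSupFiniteCompact L
        {e : L | IsPrincipalElem e ∧ e ≤ p ^ 2}
      have hgen : p ^ 2 = t.sup id := by rw [hN.2.1 (p ^ 2), ht2]
      rw [hgen]
      refine nakayama hL hN m hm hmu t (fun e hee => (ht1 hee).1) ?_
      rw [← hgen]; exact hp2le
    have : a * b = ⊥ := le_bot_iff.mp (hp2bot ▸ hab2)
    rcases hdom a b this with h' | h'
    · exact hap (h' ▸ bot_le)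
    · exact hbp (h' ▸ (bot_le.trans (hδ.1 p) : (⊥ : L) ≤ δ p))
  · intro hP n hn
    exact ⟨hP.1, fun a b hab _ => hP.2 a b hab⟩
end

section
/- Let δ be an expansion function on L and φ : L → L a function with φ(a) ≤ a for all a ∈ L. Let q ∈ L be a φ-δ-primary element. If φ(q) is a δ-primary element of L, then q is δ-primary. -/
open CompleteLattice

variable {L : Type*} [CompleteLattice L] [CommMonoid L]

theorem phi_of_q_deltaPrimary_implies_deltaPrimary (hL : IsCGMultLattice L)
    (δ φ : L → L) (hδ : IsExpansion δ) (hφ : ∀ a : L, φ a ≤ a)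
    (q : L) (hq : IsPhiDeltaPrimary φ δ q) (hφq : IsDeltaPrimary δ (φ q)) :
    IsDeltaPrimary δ q := by
  refine ⟨hq.1, fun a b hab => ?_⟩
  by_cases h : a * b ≤ φ q
  · rcases hφq.2 a b h with h1 | h2
    · exact Or.inl (h1.trans (hφ q))
    · exact Or.inr (h2.trans (hδ.2 _ _ (hφ q)))
  · exact hq.2 a b hab h
end
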